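/- Let n ≥ 1, let A be an n×n real sub-generator matrix, let α ∈ ℝⁿ be a probability vector, and let μ > 0. Then 0 ≤ τ(μ) ≤ 1, where τ(μ) = αᵀ (μI − A)⁻¹ ((−A)𝟙). -/

import Mathlib

open Matrix

attribute [local instance] Matrix.linftyOpNormedRing Matrix.linftyOpNormedAlgebra

/-- **The survival-and-exit probability `τ(μ)` lies in `[0, 1]`.**
For a sub-generator matrix `A`, a probability vector `α` and mortality rate `μ > 0`,
the quantity `τ(μ) = αᵀ (μI − A)⁻¹ ((−A)𝟙)` satisfies `0 ≤ τ(μ) ≤ 1`. -/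
theorem tau_mem_unitInterval
    (n : ℕ) (hn : 1 ≤ n) (A : Matrix (Fin n) (Fin n) ℝ)
    (hoff : ∀ i j, i ≠ j → 0 ≤ A i j)
    (hrow : ∀ i, ∑ j, A i j ≤ 0)
    (α : Fin n → ℝ) (hα0 : ∀ i, 0 ≤ α i) (hα1 : ∑ i, α i = 1)
    (μ : ℝ) (hμ : 0 < μ) :
    0 ≤ α ⬝ᵥ ((μ • (1 : Matrix (Fin n) (Fin n) ℝ) - A)⁻¹ *ᵥ ((-A) *ᵥ (1 : Fin n → ℝ))) ∧
      α ⬝ᵥ ((μ • (1 : Matrix (Fin n) (Fin n) ℝ) - A)⁻¹ *ᵥ ((-A) *ᵥ (1 : Fin n → ℝ))) ≤ 1 := by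
  classical
  have : CompleteSpace (Matrix (Fin n) (Fin n) ℝ) := FiniteDimensional.complete ℝ _
  -- diagonal entries are nonpositive
  have hAdiag : ∀ i, A i i ≤ 0 := by
    intro i
    have h2 : 0 ≤ ∑ j ∈ Finset.univ.erase i, A i j :=
      Finset.sum_nonneg fun j hj => hoff i j (Ne.symm (Finset.mem_erase.mp hj).1)
    have h3 := Finset.add_sum_erase Finset.univ (A i) (Finset.mem_univ i)
    have h1 := hrow i
    rw [← h3] at h1
    linarith
  set c : ℝ := ∑ i, (-A i i) with hc_def
  have hc : ∀ i, -A i i ≤ c := fun i =>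
    Finset.single_le_sum (f := fun j => -A j j) (fun j _ => by linarith [hAdiag j])
      (Finset.mem_univ i)
  have hc0 : 0 ≤ c := Finset.sum_nonneg fun i _ => by linarith [hAdiag i]
  set s : ℝ := μ + c with hs_def
  have hs0 : 0 < s := by linarith
  set B : Matrix (Fin n) (Fin n) ℝ := A + c • (1 : Matrix (Fin n) (Fin n) ℝ) with hB_def
  have hB0 : ∀ i j, 0 ≤ B i j := by
    intro i j
    by_cases h : i = j
    · subst h; simp [hB_def, Matrix.one_apply]; linarith [hc i]
    · simp [hB_def, Matrix.one_apply, h]; exact hoff i j h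
  have hBs : ∀ i, ∑ j, B i j ≤ c := by
    intro i
    have : ∑ j, B i j = (∑ j, A i j) + c := by
      simp [hB_def, Finset.sum_add_distrib, Matrix.one_apply]
    rw [this]; linarith [hrow i]
  set C : Matrix (Fin n) (Fin n) ℝ := s⁻¹ • B with hC_def
  have hC0 : ∀ i j, 0 ≤ C i j := fun i j => by
    simpa [hC_def] using mul_nonneg (inv_nonneg.2 hs0.le) (hB0 i j)
  -- norm bound
  have hCnorm : ‖C‖ < 1 := by
    rw [linfty_opNorm_def]
    rw [show (1 : ℝ) = ((1 : NNReal) : ℝ) by norm_num, NNReal.coe_lt_coe]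
    refine Finset.sup_lt_iff (by norm_num) |>.2 fun i _ => ?_
    rw [← NNReal.coe_lt_coe, NNReal.coe_sum]
    push_cast
    have h1 : ∑ x, ‖C i x‖ = ∑ x, C i x :=
      Finset.sum_congr rfl fun j _ => by rw [Real.norm_eq_abs, abs_of_nonneg (hC0 i j)]
    rw [h1]
    have h2 : ∑ j, C i j = s⁻¹ * ∑ j, B i j := by
      simp [hC_def, Finset.mul_sum]
    rw [h2]
    calc s⁻¹ * ∑ j, B i j ≤ s⁻¹ * c := by
          exact mul_le_mul_of_nonneg_left (hBs i) (inv_nonneg.2 hs0.le)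
      _ < 1 := by
          rw [inv_mul_lt_iff₀ hs0, mul_one]; linarith
  set T : Matrix (Fin n) (Fin n) ℝ := ∑' k : ℕ, C ^ k with hT_def
  have hTsum : HasSum (fun k : ℕ => C ^ k) T :=
    (summable_geometric_of_norm_lt_one hCnorm).hasSum
  set M : Matrix (Fin n) (Fin n) ℝ := μ • (1 : Matrix (Fin n) (Fin n) ℝ) - A with hM_def
  have hMeq : M = s • ((1 : Matrix (Fin n) (Fin n) ℝ) - C) := by
    rw [hC_def, smul_sub, smul_smul, mul_inv_cancel₀ hs0.ne', one_smul, hB_def, hs_def]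
    abel_nf
    module
  set N : Matrix (Fin n) (Fin n) ℝ := s⁻¹ • T with hN_def
  have hMN : M * N = 1 := by
    rw [hMeq, hN_def, smul_mul_assoc, mul_smul_comm, smul_smul,
      mul_inv_cancel₀ hs0.ne', one_smul, hT_def]
    exact mul_neg_geom_series C hCnorm
  have hNM : N * M = 1 := by
    rw [hMeq, hN_def, smul_mul_assoc, mul_smul_comm, smul_smul,
      inv_mul_cancel₀ hs0.ne', one_smul, hT_def]
    exact geom_series_mul_neg C hCnorm
  have hMinv : M⁻¹ = N := Matrix.inv_eq_right_inv hMN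
  -- entrywise nonnegativity of powers
  have hpow : ∀ (k : ℕ) (i j : Fin n), 0 ≤ (C ^ k) i j := by
    intro k
    induction k with
    | zero => intro i j; simp [Matrix.one_apply]; positivity
    | succ m ih =>
      intro i j
      rw [pow_succ, Matrix.mul_apply]
      exact Finset.sum_nonneg fun l _ => mul_nonneg (ih i l) (hC0 l j)
  -- entrywise nonnegativity of T
  have hT0 : ∀ i j, 0 ≤ T i j := by
    intro i j
    have hev : HasSum (fun k : ℕ => (C ^ k) i j) (T i j) := by
      have hcont : Continuous fun X : Matrix (Fin n) (Fin n) ℝ => X i j := by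
        exact (continuous_apply j).comp (continuous_apply i)
      exact hTsum.map (AddMonoidHom.mk' (fun X : Matrix (Fin n) (Fin n) ℝ => X i j)
        (fun _ _ => rfl)) hcont
    exact hasSum_le (fun k => hpow k i j) hasSum_zero hev
  have hN0 : ∀ i j, 0 ≤ N i j := fun i j => by
    simpa [hN_def] using mul_nonneg (inv_nonneg.2 hs0.le) (hT0 i j)
  -- the vector v
  set v : Fin n → ℝ := (-A) *ᵥ (1 : Fin n → ℝ) with hv_def
  have hv0 : ∀ i, 0 ≤ v i := by
    intro i
    simp only [hv_def, Matrix.mulVec, dotProduct, Pi.one_apply, mul_one,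
      Matrix.neg_apply]
    rw [Finset.sum_neg_distrib]
    linarith [hrow i]
  rw [hMinv]
  constructor
  · refine Finset.sum_nonneg fun i _ => mul_nonneg (hα0 i) ?_
    show 0 ≤ ∑ j, N i j * v j
    exact Finset.sum_nonneg fun j _ => mul_nonneg (hN0 i j) (hv0 j)
  · -- v = M *ᵥ 1 - μ • 1
    have hveq : v = M *ᵥ (1 : Fin n → ℝ) - μ • (1 : Fin n → ℝ) := by
      rw [hM_def, Matrix.sub_mulVec, Matrix.smul_mulVec, Matrix.one_mulVec, hv_def]
      ext i
      simp [Matrix.neg_mulVec]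
    have hNv : N *ᵥ v = (1 : Fin n → ℝ) - μ • (N *ᵥ (1 : Fin n → ℝ)) := by
      rw [hveq, Matrix.mulVec_sub, Matrix.mulVec_mulVec, hNM, Matrix.one_mulVec,
        Matrix.mulVec_smul]
    rw [hNv, dotProduct_sub]
    have h1 : α ⬝ᵥ (1 : Fin n → ℝ) = 1 := by
      simpa [dotProduct] using hα1
    have h2 : 0 ≤ α ⬝ᵥ (μ • (N *ᵥ (1 : Fin n → ℝ))) := by
      refine Finset.sum_nonneg fun i _ => mul_nonneg (hα0 i) ?_
      simp only [Pi.smul_apply, smul_eq_mul]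
      refine mul_nonneg hμ.le ?_
      show 0 ≤ ∑ j, N i j * (1 : Fin n → ℝ) j
      exact Finset.sum_nonneg fun j _ => mul_nonneg (hN0 i j) (by norm_num)
    rw [h1]; linarith
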